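/- Assume κ > 2 and let θ_κ⁺ = (1/2)·arcsin(2/κ). Then H₁ attains its global minimum at θ_κ⁺ with value H₁(θ_κ⁺) = (1 − κ/2 − 1/κ)/2, and moreover H₁(θ_κ⁺) < H₁(π/4) = −κ/8 < H₁(3π/4) = 1 − κ/8. -/
import Mathlib


/-- For `κ > 2` and `θ_κ⁺ = arcsin(2/κ)/2`, `H₁` attains its global minimum at `θ_κ⁺`
with value `(1 - κ/2 - 1/κ)/2`, and `H₁(θ_κ⁺) < H₁(π/4) = -κ/8 < H₁(3π/4) = 1 - κ/8`. -/
theorem stmt_5 (κ : ℝ) (hκ : 2 < κ)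
    (H₁ : ℝ → ℝ)
    (hH : ∀ θ, H₁ θ = (Real.cos θ - Real.sin θ) ^ 2 / 2
        - κ / 4 * (Real.cos θ ^ 4 + Real.sin θ ^ 4))
    (θκ : ℝ) (hθ : θκ = Real.arcsin (2 / κ) / 2) :
    H₁ θκ = (1 - κ / 2 - 1 / κ) / 2 ∧
    (∀ θ : ℝ, H₁ θκ ≤ H₁ θ) ∧
    H₁ (Real.pi / 4) = -κ / 8 ∧ H₁ (3 * Real.pi / 4) = 1 - κ / 8 ∧
    H₁ θκ < -κ / 8 ∧ -κ / 8 < 1 - κ / 8 := by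
  have hκ0 : (0:ℝ) < κ := by linarith
  have hform : ∀ θ : ℝ, H₁ θ =
      (1 - Real.sin (2*θ)) / 2 - κ/4 + κ * Real.sin (2*θ) ^ 2 / 8 := by
    intro θ
    have h1 := Real.sin_sq_add_cos_sq θ
    have h2 := Real.sin_two_mul θ
    rw [hH θ, h2]
    linear_combination (1/2 - κ/4 * (Real.sin θ^2 + Real.cos θ^2 + 1)) * h1
  have hmem : 2 / κ ∈ Set.Icc (-1:ℝ) 1 := by
    constructor
    · have : (0:ℝ) ≤ 2 / κ := by positivity
      linarith
    · rw [div_le_one hκ0]; linarith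
  have hsin : Real.sin (2 * θκ) = 2 / κ := by
    rw [hθ]
    have : 2 * (Real.arcsin (2 / κ) / 2) = Real.arcsin (2 / κ) := by ring
    rw [this, Real.sin_arcsin hmem.1 hmem.2]
  have hval : H₁ θκ = (1 - κ / 2 - 1 / κ) / 2 := by
    rw [hform θκ, hsin]
    field_simp
    ring
  have hpi4 : H₁ (Real.pi / 4) = -κ / 8 := by
    have : (2:ℝ) * (Real.pi / 4) = Real.pi / 2 := by ring
    rw [hform, this, Real.sin_pi_div_two]; ring
  have h3pi4 : H₁ (3 * Real.pi / 4) = 1 - κ / 8 := by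
    have h : Real.sin (2 * (3 * Real.pi / 4)) = -1 := by
      have : (2:ℝ) * (3 * Real.pi / 4) = Real.pi + Real.pi / 2 := by ring
      rw [this, Real.sin_add, Real.sin_pi, Real.cos_pi, Real.sin_pi_div_two]; ring
    rw [hform, h]; ring
  refine ⟨hval, ?_, hpi4, h3pi4, ?_, by linarith⟩
  · intro θ
    rw [hval, hform θ]
    set s := Real.sin (2*θ) with hsdef
    have key : (κ * s - 2)^2 / (8*κ) = κ * s^2/8 - s/2 + 1/(2*κ) := by
      field_simp; ring
    have hnn : 0 ≤ (κ * s - 2)^2 / (8*κ) := by positivity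
    rw [key] at hnn
    have h1κ : 1/(2*κ) = (1/κ)/2 := by ring
    rw [h1κ] at hnn
    linarith
  · rw [hval]
    have hinv : κ * (1/κ) = 1 := mul_one_div_cancel (ne_of_gt hκ0)
    nlinarith [mul_pos (sub_pos.mpr hκ) (sub_pos.mpr hκ), hinv]
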